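/- Let Ω ⊆ ℝ² be open and connected, let r : Ω → ℝ³ be a C³ immersion with unit normal n and mean curvature H, and let α : Ω → ℝ be a C¹ function. For p ∈ Ω let R(p) = R(n(p), α(p)) be the Rodrigues rotation about the normal n(p) by angle α(p). Suppose there exists a C² map r̄ : Ω → ℝ³ with r̄_u = R r_u and r̄_v = R r_v on Ω (so that r̄ is an isometric deformation of r whose deformation gradient at each point is a pure drilling rotation about the normal). Then α is constant on Ω and sin(α) · H ≡ 0 on Ω; in particular, if sin α does not vanish, then r is a minimal surface (H ≡ 0). -/

import Mathlib

noncomputable section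

/-- Euclidean dot product on `ℝ³`. -/
def dot3 (x y : Fin 3 → ℝ) : ℝ := x 0 * y 0 + x 1 * y 1 + x 2 * y 2

/-- Cross product on `ℝ³`. -/
def cross3 (x y : Fin 3 → ℝ) : Fin 3 → ℝ :=
  ![x 1 * y 2 - x 2 * y 1, x 2 * y 0 - x 0 * y 2, x 0 * y 1 - x 1 * y 0]

/-- Euclidean length on `ℝ³`. -/
def len3 (x : Fin 3 → ℝ) : ℝ := Real.sqrt (dot3 x x)

/-- Partial derivative in the first variable. -/
def du {E : Type*} [NormedAddCommGroup E] [NormedSpace ℝ E]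
    (f : ℝ × ℝ → E) (p : ℝ × ℝ) : E := fderiv ℝ f p (1, 0)

/-- Partial derivative in the second variable. -/
def dv {E : Type*} [NormedAddCommGroup E] [NormedSpace ℝ E]
    (f : ℝ × ℝ → E) (p : ℝ × ℝ) : E := fderiv ℝ f p (0, 1)

/-- First fundamental form coefficient `E = r_u · r_u`. -/
def Icoef₁ (r : ℝ × ℝ → Fin 3 → ℝ) (p : ℝ × ℝ) : ℝ := dot3 (du r p) (du r p)

/-- First fundamental form coefficient `F = r_u · r_v`. -/
def Icoef₂ (r : ℝ × ℝ → Fin 3 → ℝ) (p : ℝ × ℝ) : ℝ := dot3 (du r p) (dv r p)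

/-- First fundamental form coefficient `G = r_v · r_v`. -/
def Icoef₃ (r : ℝ × ℝ → Fin 3 → ℝ) (p : ℝ × ℝ) : ℝ := dot3 (dv r p) (dv r p)

/-- Unit normal `n = (r_u × r_v)/|r_u × r_v|`. -/
def unitNormal (r : ℝ × ℝ → Fin 3 → ℝ) (p : ℝ × ℝ) : Fin 3 → ℝ :=
  (len3 (cross3 (du r p) (dv r p)))⁻¹ • cross3 (du r p) (dv r p)

/-- Second fundamental form coefficient `L = r_uu · n`. -/
def IIcoef₁ (r : ℝ × ℝ → Fin 3 → ℝ) (p : ℝ × ℝ) : ℝ := dot3 (du (du r) p) (unitNormal r p)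

/-- Second fundamental form coefficient `M = r_uv · n`. -/
def IIcoef₂ (r : ℝ × ℝ → Fin 3 → ℝ) (p : ℝ × ℝ) : ℝ := dot3 (dv (du r) p) (unitNormal r p)

/-- Second fundamental form coefficient `N = r_vv · n`. -/
def IIcoef₃ (r : ℝ × ℝ → Fin 3 → ℝ) (p : ℝ × ℝ) : ℝ := dot3 (dv (dv r) p) (unitNormal r p)

/-- Gaussian curvature `K = (LN − M²)/(EG − F²)`. -/
def gaussK (r : ℝ × ℝ → Fin 3 → ℝ) (p : ℝ × ℝ) : ℝ :=
  (IIcoef₁ r p * IIcoef₃ r p - IIcoef₂ r p ^ 2) /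
    (Icoef₁ r p * Icoef₃ r p - Icoef₂ r p ^ 2)

/-- Mean curvature `H = (EN − 2FM + GL)/(2(EG − F²))`. -/
def meanH (r : ℝ × ℝ → Fin 3 → ℝ) (p : ℝ × ℝ) : ℝ :=
  (Icoef₁ r p * IIcoef₃ r p - 2 * Icoef₂ r p * IIcoef₂ r p + Icoef₃ r p * IIcoef₁ r p) /
    (2 * (Icoef₁ r p * Icoef₃ r p - Icoef₂ r p ^ 2))

/-- Rodrigues rotation about the unit vector `e` by the angle `a`. -/
def rodrigues (e : Fin 3 → ℝ) (a : ℝ) (x : Fin 3 → ℝ) : Fin 3 → ℝ :=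
  Real.cos a • x + Real.sin a • cross3 e x + ((1 - Real.cos a) * dot3 e x) • e

namespace PD

variable {f g a : ℝ × ℝ → ℝ} {F G : ℝ × ℝ → Fin 3 → ℝ} {p y : ℝ × ℝ} {X : Fin 3 → ℝ}
  {Ω : Set (ℝ × ℝ)}

/-! ### Algebraic identities -/

lemma dot3_comm (x z : Fin 3 → ℝ) : dot3 x z = dot3 z x := by simp [dot3]; ring

lemma dot3_smul_left (t : ℝ) (x z : Fin 3 → ℝ) : dot3 (t • x) z = t * dot3 x z := by
  simp [dot3]; ring

lemma dot3_smul_right (t : ℝ) (x z : Fin 3 → ℝ) : dot3 x (t • z) = t * dot3 x z := by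
  simp [dot3]; ring

lemma dot3_add_left (x z w : Fin 3 → ℝ) : dot3 (x + z) w = dot3 x w + dot3 z w := by
  simp [dot3]; ring

lemma dot3_zero_right (x : Fin 3 → ℝ) : dot3 x 0 = 0 := by simp [dot3]

lemma dot3_self_nonneg (x : Fin 3 → ℝ) : 0 ≤ dot3 x x := by
  simp only [dot3]
  nlinarith [mul_self_nonneg (x 0), mul_self_nonneg (x 1), mul_self_nonneg (x 2)]

lemma dot3_self_pos (x : Fin 3 → ℝ) (h : x ≠ 0) : 0 < dot3 x x := by
  rcases lt_or_eq_of_le (dot3_self_nonneg x) with h1 | h1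
  · exact h1
  · exfalso; apply h; funext i
    fin_cases i <;>
      · simp only [dot3] at h1; simp
        nlinarith [mul_self_nonneg (x 0), mul_self_nonneg (x 1), mul_self_nonneg (x 2)]

lemma dot3_cross_self_left (x z : Fin 3 → ℝ) : dot3 (cross3 x z) x = 0 := by
  simp [dot3, cross3]; ring

lemma dot3_cross_self_right (x z : Fin 3 → ℝ) : dot3 (cross3 x z) z = 0 := by
  simp [dot3, cross3]; ring

lemma triple_cyc (x z w : Fin 3 → ℝ) : dot3 (cross3 x z) w = dot3 (cross3 z w) x := by
  simp [dot3, cross3]; ring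

lemma dot3_cross_swap (x z w : Fin 3 → ℝ) : dot3 (cross3 x z) w = -dot3 (cross3 z x) w := by
  simp [dot3, cross3]; ring

lemma lagrange (x z w t : Fin 3 → ℝ) :
    dot3 (cross3 x z) (cross3 w t) = dot3 x w * dot3 z t - dot3 x t * dot3 z w := by
  simp [dot3, cross3]; ring

lemma dot3_rodrigues (e : Fin 3 → ℝ) (t : ℝ) (x X : Fin 3 → ℝ) :
    dot3 (rodrigues e t x) X = Real.cos t * dot3 x X + Real.sin t * dot3 (cross3 e x) X
      + ((1 - Real.cos t) * dot3 e x) * dot3 e X := by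
  unfold rodrigues
  rw [dot3_add_left, dot3_add_left, dot3_smul_left, dot3_smul_left, dot3_smul_left]

/-! ### Derivative helpers -/

lemma fd_mul (hf : DifferentiableAt ℝ f p) (hg : DifferentiableAt ℝ g p) :
    fderiv ℝ (fun q => f q * g q) p y = fderiv ℝ f p y * g p + f p * fderiv ℝ g p y := by
  rw [fderiv_fun_mul hf hg]; simp [mul_comm]; ring

lemma fd_add (hf : DifferentiableAt ℝ f p) (hg : DifferentiableAt ℝ g p) :
    fderiv ℝ (fun q => f q + g q) p y = fderiv ℝ f p y + fderiv ℝ g p y := by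
  rw [fderiv_fun_add hf hg]; simp

lemma fd_sub (hf : DifferentiableAt ℝ f p) (hg : DifferentiableAt ℝ g p) :
    fderiv ℝ (fun q => f q - g q) p y = fderiv ℝ f p y - fderiv ℝ g p y := by
  rw [fderiv_fun_sub hf hg]; simp

lemma fd_proj (hF : DifferentiableAt ℝ F p) (i : Fin 3) :
    fderiv ℝ (fun q => F q i) p y = fderiv ℝ F p y i := by
  have h := fderiv_pi (𝕜 := ℝ) (φ := fun i q => F q i) (x := p)
    (fun i => differentiableAt_pi.mp hF i)
  have hF' : F = fun x i => F x i := rfl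
  rw [show (fun q => F q i) = fun q => (fun j => F q j) i from rfl]
  conv_rhs => rw [hF']
  rw [h]
  simp

lemma diff_proj (hF : DifferentiableAt ℝ F p) (i : Fin 3) :
    DifferentiableAt ℝ (fun q => F q i) p := differentiableAt_pi.mp hF i

lemma diff_dot3 (hF : DifferentiableAt ℝ F p) (hG : DifferentiableAt ℝ G p) :
    DifferentiableAt ℝ (fun q => dot3 (F q) (G q)) p := by
  simp only [dot3]
  exact (((diff_proj hF 0).mul (diff_proj hG 0)).add
    ((diff_proj hF 1).mul (diff_proj hG 1))).add ((diff_proj hF 2).mul (diff_proj hG 2))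

lemma fd_dot3 (hF : DifferentiableAt ℝ F p) (hG : DifferentiableAt ℝ G p) :
    fderiv ℝ (fun q => dot3 (F q) (G q)) p y
      = dot3 (fderiv ℝ F p y) (G p) + dot3 (F p) (fderiv ℝ G p y) := by
  simp only [dot3]
  rw [fd_add (((diff_proj hF 0).fun_mul (diff_proj hG 0)).fun_add
      ((diff_proj hF 1).fun_mul (diff_proj hG 1))) ((diff_proj hF 2).fun_mul (diff_proj hG 2)),
    fd_add ((diff_proj hF 0).fun_mul (diff_proj hG 0)) ((diff_proj hF 1).fun_mul (diff_proj hG 1)),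
    fd_mul (diff_proj hF 0) (diff_proj hG 0), fd_mul (diff_proj hF 1) (diff_proj hG 1),
    fd_mul (diff_proj hF 2) (diff_proj hG 2),
    fd_proj hF 0, fd_proj hF 1, fd_proj hF 2, fd_proj hG 0, fd_proj hG 1, fd_proj hG 2]
  ring

lemma diff_dot3_const (hF : DifferentiableAt ℝ F p) :
    DifferentiableAt ℝ (fun q => dot3 (F q) X) p :=
  diff_dot3 hF (differentiableAt_const X)

lemma fd_dot3_const (hF : DifferentiableAt ℝ F p) :
    fderiv ℝ (fun q => dot3 (F q) X) p y = dot3 (fderiv ℝ F p y) X := by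
  have h := fd_dot3 (y := y) hF (differentiableAt_const (c := X))
  simpa [dot3_zero_right] using h

lemma diff_cross3 (hF : DifferentiableAt ℝ F p) (hG : DifferentiableAt ℝ G p) :
    DifferentiableAt ℝ (fun q => cross3 (F q) (G q)) p := by
  rw [differentiableAt_pi]
  intro i
  fin_cases i <;>
    simp only [cross3, Matrix.cons_val_zero, Matrix.cons_val_one, Matrix.head_cons,
      Matrix.cons_val_two, Matrix.tail_cons, Fin.isValue] <;>
    exact ((diff_proj hF _).mul (diff_proj hG _)).sub ((diff_proj hF _).mul (diff_proj hG _))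

lemma fd_cross3 (hF : DifferentiableAt ℝ F p) (hG : DifferentiableAt ℝ G p) :
    fderiv ℝ (fun q => cross3 (F q) (G q)) p y
      = cross3 (fderiv ℝ F p y) (G p) + cross3 (F p) (fderiv ℝ G p y) := by
  funext i
  rw [← fd_proj (diff_cross3 hF hG) i]
  fin_cases i
  · show fderiv ℝ (fun q => F q 1 * G q 2 - F q 2 * G q 1) p y
        = (fderiv ℝ F p y 1 * G p 2 - fderiv ℝ F p y 2 * G p 1)
          + (F p 1 * fderiv ℝ G p y 2 - F p 2 * fderiv ℝ G p y 1)
    rw [fd_sub ((diff_proj hF _).fun_mul (diff_proj hG _)) ((diff_proj hF _).fun_mul (diff_proj hG _)),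
      fd_mul (diff_proj hF _) (diff_proj hG _), fd_mul (diff_proj hF _) (diff_proj hG _),
      fd_proj hF, fd_proj hF, fd_proj hG, fd_proj hG]
    ring
  · show fderiv ℝ (fun q => F q 2 * G q 0 - F q 0 * G q 2) p y
        = (fderiv ℝ F p y 2 * G p 0 - fderiv ℝ F p y 0 * G p 2)
          + (F p 2 * fderiv ℝ G p y 0 - F p 0 * fderiv ℝ G p y 2)
    rw [fd_sub ((diff_proj hF _).fun_mul (diff_proj hG _)) ((diff_proj hF _).fun_mul (diff_proj hG _)),
      fd_mul (diff_proj hF _) (diff_proj hG _), fd_mul (diff_proj hF _) (diff_proj hG _),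
      fd_proj hF, fd_proj hF, fd_proj hG, fd_proj hG]
    ring
  · show fderiv ℝ (fun q => F q 0 * G q 1 - F q 1 * G q 0) p y
        = (fderiv ℝ F p y 0 * G p 1 - fderiv ℝ F p y 1 * G p 0)
          + (F p 0 * fderiv ℝ G p y 1 - F p 1 * fderiv ℝ G p y 0)
    rw [fd_sub ((diff_proj hF _).fun_mul (diff_proj hG _)) ((diff_proj hF _).fun_mul (diff_proj hG _)),
      fd_mul (diff_proj hF _) (diff_proj hG _), fd_mul (diff_proj hF _) (diff_proj hG _),
      fd_proj hF, fd_proj hF, fd_proj hG, fd_proj hG]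
    ring

lemma fd_cos (hα : DifferentiableAt ℝ a p) :
    fderiv ℝ (fun q => Real.cos (a q)) p y = -Real.sin (a p) * fderiv ℝ a p y := by
  have h := (Real.hasDerivAt_cos (a p)).comp_hasFDerivAt p hα.hasFDerivAt
  rw [show (fun q => Real.cos (a q)) = Real.cos ∘ a from rfl, h.fderiv]
  simp

lemma fd_sin (hα : DifferentiableAt ℝ a p) :
    fderiv ℝ (fun q => Real.sin (a q)) p y = Real.cos (a p) * fderiv ℝ a p y := by
  have h := (Real.hasDerivAt_sin (a p)).comp_hasFDerivAt p hα.hasFDerivAt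
  rw [show (fun q => Real.sin (a q)) = Real.sin ∘ a from rfl, h.fderiv]
  simp

lemma contDiffOn_dot3_const {n : WithTop ℕ∞} (hF : ContDiffOn ℝ n F Ω) :
    ContDiffOn ℝ n (fun q => dot3 (F q) X) Ω := by
  simp only [dot3]
  have h : ∀ i : Fin 3, ContDiffOn ℝ n (fun q => F q i) Ω := fun i =>
    (ContinuousLinearMap.proj (R := ℝ) (φ := fun _ : Fin 3 => ℝ) i).contDiff.comp_contDiffOn hF
  exact (((h 0).mul contDiffOn_const).add ((h 1).mul contDiffOn_const)).add
    ((h 2).mul contDiffOn_const)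

lemma symm_partials {φ : ℝ × ℝ → ℝ} (hΩ : IsOpen Ω) (hp : p ∈ Ω)
    (hφ : ContDiffOn ℝ 2 φ Ω) : dv (du φ) p = du (dv φ) p := by
  have hat : ContDiffAt ℝ 2 φ p := hφ.contDiffAt (hΩ.mem_nhds hp)
  have hsymm := hat.isSymmSndFDerivAt (by simp)
  have hd : DifferentiableAt ℝ (fderiv ℝ φ) p :=
    (hat.fderiv_right (m := 1) le_rfl).differentiableAt one_ne_zero
  have key : ∀ v z : ℝ × ℝ, fderiv ℝ (fun q => fderiv ℝ φ q v) p z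
      = fderiv ℝ (fderiv ℝ φ) p z v := by
    intro v z
    rw [fderiv_clm_apply hd (differentiableAt_const v)]
    simp
  show fderiv ℝ (fun q => fderiv ℝ φ q (1, 0)) p (0, 1)
      = fderiv ℝ (fun q => fderiv ℝ φ q (0, 1)) p (1, 0)
  rw [key, key]
  exact hsymm _ _

lemma diffAt_of_contDiffOn {E : Type*} [NormedAddCommGroup E] [NormedSpace ℝ E]
    {m : WithTop ℕ∞} {F : ℝ × ℝ → E} (hΩ : IsOpen Ω) (hF : ContDiffOn ℝ m F Ω)
    (hm : 1 ≤ m) : ∀ q ∈ Ω, DifferentiableAt ℝ F q := fun q hq =>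
  ((hF.differentiableOn (zero_lt_one.trans_le hm).ne') q hq).differentiableAt (hΩ.mem_nhds hq)

lemma du_contDiffOn {E : Type*} [NormedAddCommGroup E] [NormedSpace ℝ E]
    {m n : WithTop ℕ∞} {F : ℝ × ℝ → E} (hΩ : IsOpen Ω) (hF : ContDiffOn ℝ n F Ω)
    (hmn : m + 1 ≤ n) : ContDiffOn ℝ m (du F) Ω :=
  (hF.fderiv_of_isOpen hΩ hmn).clm_apply contDiffOn_const

lemma dv_contDiffOn {E : Type*} [NormedAddCommGroup E] [NormedSpace ℝ E]
    {m n : WithTop ℕ∞} {F : ℝ × ℝ → E} (hΩ : IsOpen Ω) (hF : ContDiffOn ℝ n F Ω)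
    (hmn : m + 1 ≤ n) : ContDiffOn ℝ m (dv F) Ω :=
  (hF.fderiv_of_isOpen hΩ hmn).clm_apply contDiffOn_const

lemma symm_fun (hΩ : IsOpen Ω) (hp : p ∈ Ω) (hF : ContDiffOn ℝ 2 F Ω) (X : Fin 3 → ℝ) :
    fderiv ℝ (fun q => dot3 (du F q) X) p (0, 1)
      = fderiv ℝ (fun q => dot3 (dv F q) X) p (1, 0) := by
  set φ : ℝ × ℝ → ℝ := fun q => dot3 (F q) X with hφdef
  have hφ : ContDiffOn ℝ 2 φ Ω := contDiffOn_dot3_const hF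
  have hFd : ∀ q ∈ Ω, DifferentiableAt ℝ F q := diffAt_of_contDiffOn hΩ hF (by norm_num)
  have h1 : ∀ q ∈ Ω, dot3 (du F q) X = du φ q := fun q hq =>
    (fd_dot3_const (hFd q hq)).symm
  have h2 : ∀ q ∈ Ω, dot3 (dv F q) X = dv φ q := fun q hq =>
    (fd_dot3_const (hFd q hq)).symm
  have e1 : (fun q => dot3 (du F q) X) =ᶠ[nhds p] du φ :=
    Filter.eventuallyEq_of_mem (hΩ.mem_nhds hp) h1
  have e2 : (fun q => dot3 (dv F q) X) =ᶠ[nhds p] dv φ :=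
    Filter.eventuallyEq_of_mem (hΩ.mem_nhds hp) h2
  rw [e1.fderiv_eq, e2.fderiv_eq]
  exact symm_partials hΩ hp hφ

lemma symm_dot3 (hΩ : IsOpen Ω) (hp : p ∈ Ω) (hF : ContDiffOn ℝ 3 F Ω) (X : Fin 3 → ℝ) :
    dot3 (dv (du F) p) X = dot3 (du (dv F) p) X := by
  have hF2 : ContDiffOn ℝ 2 F Ω := hF.of_le (by norm_num)
  have hdu : DifferentiableAt ℝ (du F) p :=
    diffAt_of_contDiffOn hΩ (du_contDiffOn (m := 1) hΩ hF2 le_rfl) le_rfl p hp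
  have hdv : DifferentiableAt ℝ (dv F) p :=
    diffAt_of_contDiffOn hΩ (dv_contDiffOn (m := 1) hΩ hF2 le_rfl) le_rfl p hp
  have h := symm_fun hΩ hp hF2 X
  rw [fd_dot3_const hdu, fd_dot3_const hdv] at h
  exact h

lemma const_of_fderiv_zero {a : ℝ × ℝ → ℝ} {Ω : Set (ℝ × ℝ)} (hΩ : IsOpen Ω)
    (hconn : IsConnected Ω)
    (hd : ∀ q ∈ Ω, DifferentiableAt ℝ a q) (hz : ∀ q ∈ Ω, fderiv ℝ a q = 0) :
    ∀ p ∈ Ω, ∀ q ∈ Ω, a p = a q := by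
  have hloc : ∀ z ∈ Ω, ∃ ε > 0, Metric.ball z ε ⊆ Ω ∧
      ∀ x ∈ Metric.ball z ε, a x = a z := by
    intro z hz'
    obtain ⟨ε, hε, hball⟩ := Metric.isOpen_iff.mp hΩ z hz'
    refine ⟨ε, hε, hball, fun x hx => ?_⟩
    have hdiff : DifferentiableOn ℝ a (Metric.ball z ε) :=
      fun x hx => (hd x (hball hx)).differentiableWithinAt
    refine (convex_ball z ε).is_const_of_fderivWithin_eq_zero hdiff ?_ hx (Metric.mem_ball_self hε)
    intro x hx
    rw [fderivWithin_of_isOpen Metric.isOpen_ball hx]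
    exact hz x (hball hx)
  intro p hp q hq
  by_contra hne
  have hUopen : IsOpen {z | z ∈ Ω ∧ a z = a p} := by
    rw [Metric.isOpen_iff]
    intro z hz'
    obtain ⟨ε, hε, hsub, hconst⟩ := hloc z hz'.1
    exact ⟨ε, hε, fun x hx => ⟨hsub hx, (hconst x hx).trans hz'.2⟩⟩
  have hVopen : IsOpen {z | z ∈ Ω ∧ a z ≠ a p} := by
    rw [Metric.isOpen_iff]
    intro z hz'
    obtain ⟨ε, hε, hsub, hconst⟩ := hloc z hz'.1
    exact ⟨ε, hε, fun x hx => ⟨hsub hx, (hconst x hx).symm ▸ hz'.2⟩⟩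
  obtain ⟨x, hxΩ, hxU, hxV⟩ := hconn.isPreconnected _ _ hUopen hVopen
    (fun z hz' => by
      by_cases h : a z = a p
      · exact Or.inl ⟨hz', h⟩
      · exact Or.inr ⟨hz', h⟩)
    ⟨p, hp, hp, rfl⟩ ⟨q, hq, hq, fun h => hne h.symm⟩
  exact hxV.2 hxU.2

lemma key_pointwise
    (Ω : Set (ℝ × ℝ)) (hΩ : IsOpen Ω)
    (r : ℝ × ℝ → Fin 3 → ℝ) (hr : ContDiffOn ℝ 3 r Ω)
    (himm : ∀ p ∈ Ω, cross3 (du r p) (dv r p) ≠ 0)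
    (α : ℝ × ℝ → ℝ) (hα : ContDiffOn ℝ 1 α Ω)
    (rbar : ℝ × ℝ → Fin 3 → ℝ) (hrbar : ContDiffOn ℝ 2 rbar Ω)
    (hRb : ∀ q ∈ Ω, du rbar q = rodrigues (unitNormal r q) (α q) (du r q) ∧
        dv rbar q = rodrigues (unitNormal r q) (α q) (dv r q))
    (p : ℝ × ℝ) (hp : p ∈ Ω) :
    fderiv ℝ α p = 0 ∧
      Real.sin (α p) * (Icoef₁ r p * IIcoef₃ r p - 2 * Icoef₂ r p * IIcoef₂ r p
        + Icoef₃ r p * IIcoef₁ r p) = 0 := by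
  have hΩp : Ω ∈ nhds p := hΩ.mem_nhds hp
  have hru2 : ContDiffOn ℝ 2 (du r) Ω := du_contDiffOn hΩ hr (by norm_num)
  have hrv2 : ContDiffOn ℝ 2 (dv r) Ω := dv_contDiffOn hΩ hr (by norm_num)
  have hrud : ∀ q ∈ Ω, DifferentiableAt ℝ (du r) q :=
    diffAt_of_contDiffOn hΩ hru2 (by norm_num)
  have hrvd : ∀ q ∈ Ω, DifferentiableAt ℝ (dv r) q :=
    diffAt_of_contDiffOn hΩ hrv2 (by norm_num)
  have hαd : DifferentiableAt ℝ α p := diffAt_of_contDiffOn hΩ hα le_rfl p hp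
  set n : ℝ × ℝ → Fin 3 → ℝ := unitNormal r with hndef
  have hWd : ∀ q ∈ Ω, DifferentiableAt ℝ (fun z => cross3 (du r z) (dv r z)) q :=
    fun q hq => diff_cross3 (hrud q hq) (hrvd q hq)
  have hWpos : ∀ q ∈ Ω, 0 < dot3 (cross3 (du r q) (dv r q)) (cross3 (du r q) (dv r q)) :=
    fun q hq => dot3_self_pos _ (himm q hq)
  have hlpos : ∀ q ∈ Ω, 0 < len3 (cross3 (du r q) (dv r q)) := fun q hq =>
    Real.sqrt_pos.mpr (hWpos q hq)
  have hlsq : ∀ q ∈ Ω, len3 (cross3 (du r q) (dv r q)) ^ 2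
      = dot3 (cross3 (du r q) (dv r q)) (cross3 (du r q) (dv r q)) := fun q hq =>
    Real.sq_sqrt (le_of_lt (hWpos q hq))
  have hld : ∀ q ∈ Ω, DifferentiableAt ℝ (fun z => len3 (cross3 (du r z) (dv r z))) q := by
    intro q hq
    have h : (fun z => len3 (cross3 (du r z) (dv r z)))
        = fun z => Real.sqrt (dot3 (cross3 (du r z) (dv r z)) (cross3 (du r z) (dv r z))) := rfl
    rw [h]
    exact (diff_dot3 (hWd q hq) (hWd q hq)).sqrt (ne_of_gt (hWpos q hq))
  have hnd : ∀ q ∈ Ω, DifferentiableAt ℝ n q := by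
    intro q hq
    rw [differentiableAt_pi]
    intro i
    have h : (fun z => n z i)
        = fun z => (len3 (cross3 (du r z) (dv r z)))⁻¹ * cross3 (du r z) (dv r z) i := rfl
    rw [h]
    exact ((hld q hq).inv (ne_of_gt (hlpos q hq))).mul (diff_proj (hWd q hq) i)
  -- pointwise identities on Ω
  have hnru0 : ∀ q ∈ Ω, dot3 (n q) (du r q) = 0 := by
    intro q hq
    show dot3 ((len3 (cross3 (du r q) (dv r q)))⁻¹ • cross3 (du r q) (dv r q)) (du r q) = 0
    rw [dot3_smul_left, dot3_cross_self_left, mul_zero]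
  have hnrv0 : ∀ q ∈ Ω, dot3 (n q) (dv r q) = 0 := by
    intro q hq
    show dot3 ((len3 (cross3 (du r q) (dv r q)))⁻¹ • cross3 (du r q) (dv r q)) (dv r q) = 0
    rw [dot3_smul_left, dot3_cross_self_right, mul_zero]
  have hnn1 : ∀ q ∈ Ω, dot3 (n q) (n q) = 1 := by
    intro q hq
    show dot3 ((len3 (cross3 (du r q) (dv r q)))⁻¹ • cross3 (du r q) (dv r q))
      ((len3 (cross3 (du r q) (dv r q)))⁻¹ • cross3 (du r q) (dv r q)) = 1
    rw [dot3_smul_left, dot3_smul_right, ← hlsq q hq]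
    have := ne_of_gt (hlpos q hq)
    field_simp
  have hWn : ∀ q ∈ Ω, cross3 (du r q) (dv r q) = len3 (cross3 (du r q) (dv r q)) • n q := by
    intro q hq
    show _ = len3 (cross3 (du r q) (dv r q))
      • ((len3 (cross3 (du r q) (dv r q)))⁻¹ • cross3 (du r q) (dv r q))
    rw [smul_smul, mul_inv_cancel₀ (ne_of_gt (hlpos q hq)), one_smul]
  have hnW : ∀ q ∈ Ω, dot3 (n q) (cross3 (du r q) (dv r q))
      = len3 (cross3 (du r q) (dv r q)) := by
    intro q hq
    have hne := ne_of_gt (hlpos q hq)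
    show dot3 ((len3 (cross3 (du r q) (dv r q)))⁻¹ • cross3 (du r q) (dv r q))
      (cross3 (du r q) (dv r q)) = _
    rw [dot3_smul_left, ← hlsq q hq]
    field_simp
  -- derivative identities at p
  have hNn : ∀ y, dot3 (fderiv ℝ n p y) (n p) = 0 := by
    intro y
    have he : (fun q => dot3 (n q) (n q)) =ᶠ[nhds p] fun _ => (1:ℝ) :=
      Filter.eventuallyEq_of_mem hΩp hnn1
    have h0 : fderiv ℝ (fun q => dot3 (n q) (n q)) p y = 0 := by
      rw [he.fderiv_eq]; simp
    rw [fd_dot3 (hnd p hp) (hnd p hp), dot3_comm (n p) (fderiv ℝ n p y)] at h0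
    linarith
  have hNru : ∀ y, dot3 (fderiv ℝ n p y) (du r p)
      = - dot3 (fderiv ℝ (du r) p y) (n p) := by
    intro y
    have he : (fun q => dot3 (n q) (du r q)) =ᶠ[nhds p] fun _ => (0:ℝ) :=
      Filter.eventuallyEq_of_mem hΩp hnru0
    have h0 : fderiv ℝ (fun q => dot3 (n q) (du r q)) p y = 0 := by
      rw [he.fderiv_eq]; simp
    rw [fd_dot3 (hnd p hp) (hrud p hp), dot3_comm (n p) (fderiv ℝ (du r) p y)] at h0
    linarith
  have hNrv : ∀ y, dot3 (fderiv ℝ n p y) (dv r p)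
      = - dot3 (fderiv ℝ (dv r) p y) (n p) := by
    intro y
    have he : (fun q => dot3 (n q) (dv r q)) =ᶠ[nhds p] fun _ => (0:ℝ) :=
      Filter.eventuallyEq_of_mem hΩp hnrv0
    have h0 : fderiv ℝ (fun q => dot3 (n q) (dv r q)) p y = 0 := by
      rw [he.fderiv_eq]; simp
    rw [fd_dot3 (hnd p hp) (hrvd p hp), dot3_comm (n p) (fderiv ℝ (dv r) p y)] at h0
    linarith
  -- symmetry of second derivatives of r
  have hsymm : ∀ X : Fin 3 → ℝ,
      dot3 (fderiv ℝ (du r) p (0, 1)) X = dot3 (fderiv ℝ (dv r) p (1, 0)) X :=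
    fun X => symm_dot3 hΩ hp hr X
  -- differentiability of scalar factors
  have hcosd : DifferentiableAt ℝ (fun q => Real.cos (α q)) p := hαd.cos
  have hsind : DifferentiableAt ℝ (fun q => Real.sin (α q)) p := hαd.sin
  -- the key equation, for every constant vector X
  have keyX : ∀ X : Fin 3 → ℝ,
      -Real.sin (α p) * fderiv ℝ α p (0, 1) * dot3 (du r p) X
        + Real.cos (α p) * fderiv ℝ α p (0, 1) * dot3 (cross3 (n p) (du r p)) X
        + Real.sin (α p) * dot3 (cross3 (fderiv ℝ n p (0, 1)) (du r p)) X
      = -Real.sin (α p) * fderiv ℝ α p (1, 0) * dot3 (dv r p) X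
        + Real.cos (α p) * fderiv ℝ α p (1, 0) * dot3 (cross3 (n p) (dv r p)) X
        + Real.sin (α p) * dot3 (cross3 (fderiv ℝ n p (1, 0)) (dv r p)) X := by
    intro X
    have hs := symm_fun hΩ hp hrbar X
    have hev_u : (fun q => dot3 (du rbar q) X) =ᶠ[nhds p]
        (fun q => Real.cos (α q) * dot3 (du r q) X
          + Real.sin (α q) * dot3 (cross3 (n q) (du r q)) X) := by
      apply Filter.eventuallyEq_of_mem hΩp
      intro q hq
      show dot3 (du rbar q) X = _
      rw [(hRb q hq).1, dot3_rodrigues, hnru0 q hq]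
      ring
    have hev_v : (fun q => dot3 (dv rbar q) X) =ᶠ[nhds p]
        (fun q => Real.cos (α q) * dot3 (dv r q) X
          + Real.sin (α q) * dot3 (cross3 (n q) (dv r q)) X) := by
      apply Filter.eventuallyEq_of_mem hΩp
      intro q hq
      show dot3 (dv rbar q) X = _
      rw [(hRb q hq).2, dot3_rodrigues, hnrv0 q hq]
      ring
    have hduL : fderiv ℝ (fun q => dot3 (du rbar q) X) p (0, 1)
        = -Real.sin (α p) * fderiv ℝ α p (0, 1) * dot3 (du r p) X
          + Real.cos (α p) * dot3 (fderiv ℝ (du r) p (0, 1)) X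
          + Real.cos (α p) * fderiv ℝ α p (0, 1) * dot3 (cross3 (n p) (du r p)) X
          + Real.sin (α p) * (dot3 (cross3 (fderiv ℝ n p (0, 1)) (du r p)) X
              + dot3 (cross3 (n p) (fderiv ℝ (du r) p (0, 1))) X) := by
      rw [hev_u.fderiv_eq]
      rw [fd_add (hcosd.fun_mul (diff_dot3_const (hrud p hp)))
          (hsind.fun_mul (diff_dot3_const (diff_cross3 (hnd p hp) (hrud p hp)))),
        fd_mul hcosd (diff_dot3_const (hrud p hp)),
        fd_mul hsind (diff_dot3_const (diff_cross3 (hnd p hp) (hrud p hp))),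
        fd_dot3_const (hrud p hp),
        fd_dot3_const (diff_cross3 (hnd p hp) (hrud p hp)),
        fd_cross3 (hnd p hp) (hrud p hp),
        dot3_add_left,
        fd_cos hαd, fd_sin hαd]
      ring
    have hduR : fderiv ℝ (fun q => dot3 (dv rbar q) X) p (1, 0)
        = -Real.sin (α p) * fderiv ℝ α p (1, 0) * dot3 (dv r p) X
          + Real.cos (α p) * dot3 (fderiv ℝ (dv r) p (1, 0)) X
          + Real.cos (α p) * fderiv ℝ α p (1, 0) * dot3 (cross3 (n p) (dv r p)) X
          + Real.sin (α p) * (dot3 (cross3 (fderiv ℝ n p (1, 0)) (dv r p)) X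
              + dot3 (cross3 (n p) (fderiv ℝ (dv r) p (1, 0))) X) := by
      rw [hev_v.fderiv_eq]
      rw [fd_add (hcosd.fun_mul (diff_dot3_const (hrvd p hp)))
          (hsind.fun_mul (diff_dot3_const (diff_cross3 (hnd p hp) (hrvd p hp)))),
        fd_mul hcosd (diff_dot3_const (hrvd p hp)),
        fd_mul hsind (diff_dot3_const (diff_cross3 (hnd p hp) (hrvd p hp))),
        fd_dot3_const (hrvd p hp),
        fd_dot3_const (diff_cross3 (hnd p hp) (hrvd p hp)),
        fd_cross3 (hnd p hp) (hrvd p hp),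
        dot3_add_left,
        fd_cos hαd, fd_sin hαd]
      ring
    rw [hduL, hduR] at hs
    have c1 : dot3 (fderiv ℝ (du r) p (0, 1)) X = dot3 (fderiv ℝ (dv r) p (1, 0)) X :=
      hsymm X
    have c2 : dot3 (cross3 (n p) (fderiv ℝ (du r) p (0, 1))) X
        = dot3 (cross3 (n p) (fderiv ℝ (dv r) p (1, 0))) X := by
      have t : ∀ m : Fin 3 → ℝ, dot3 (cross3 (n p) m) X = dot3 m (cross3 X (n p)) := by
        intro m
        rw [triple_cyc, triple_cyc, dot3_comm]
      rw [t, t]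
      exact hsymm (cross3 X (n p))
    linear_combination hs - Real.cos (α p) * c1 - Real.sin (α p) * c2
  -- values of the triple products
  have hcomm : dot3 (dv r p) (du r p) = dot3 (du r p) (dv r p) := dot3_comm _ _
  have hNuW : dot3 (fderiv ℝ n p (1, 0)) (cross3 (du r p) (dv r p)) = 0 := by
    rw [hWn p hp, dot3_smul_right, hNn, mul_zero]
  have hNvW : dot3 (fderiv ℝ n p (0, 1)) (cross3 (du r p) (dv r p)) = 0 := by
    rw [hWn p hp, dot3_smul_right, hNn, mul_zero]
  -- equation 1 : X = r_u
  have e1 := keyX (du r p)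
  have v3 : dot3 (cross3 (n p) (dv r p)) (du r p) = -len3 (cross3 (du r p) (dv r p)) := by
    rw [triple_cyc, dot3_cross_swap, dot3_comm, hnW p hp]
  have v4 : dot3 (cross3 (fderiv ℝ n p (1, 0)) (dv r p)) (du r p) = 0 := by
    rw [triple_cyc, dot3_cross_swap, dot3_comm, hNuW]
    norm_num
  rw [dot3_cross_self_right (n p) (du r p),
    dot3_cross_self_right (fderiv ℝ n p (0, 1)) (du r p), v3, v4, hcomm] at e1
  have eq1 : -Real.sin (α p) * fderiv ℝ α p (0, 1) * dot3 (du r p) (du r p)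
      + Real.sin (α p) * fderiv ℝ α p (1, 0) * dot3 (du r p) (dv r p)
      + Real.cos (α p) * fderiv ℝ α p (1, 0) * len3 (cross3 (du r p) (dv r p)) = 0 := by
    linear_combination e1
  -- equation 2 : X = r_v
  have e2 := keyX (dv r p)
  have w1 : dot3 (cross3 (n p) (du r p)) (dv r p) = len3 (cross3 (du r p) (dv r p)) := by
    rw [triple_cyc, dot3_comm, hnW p hp]
  have w2 : dot3 (cross3 (fderiv ℝ n p (0, 1)) (du r p)) (dv r p) = 0 := by
    rw [triple_cyc, dot3_comm, hNvW]
  rw [w1, w2, dot3_cross_self_right (n p) (dv r p),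
    dot3_cross_self_right (fderiv ℝ n p (1, 0)) (dv r p)] at e2
  have eq2 : -Real.sin (α p) * fderiv ℝ α p (0, 1) * dot3 (du r p) (dv r p)
      + Real.cos (α p) * fderiv ℝ α p (0, 1) * len3 (cross3 (du r p) (dv r p))
      + Real.sin (α p) * fderiv ℝ α p (1, 0) * dot3 (dv r p) (dv r p) = 0 := by
    linear_combination e2
  -- equation 3 : X = n
  have e3 := keyX (n p)
  have u1 : dot3 (du r p) (n p) = 0 := by rw [dot3_comm]; exact hnru0 p hp
  have u2 : dot3 (dv r p) (n p) = 0 := by rw [dot3_comm]; exact hnrv0 p hp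
  have u5 : dot3 (cross3 (fderiv ℝ n p (0, 1)) (du r p)) (n p)
      = (len3 (cross3 (du r p) (dv r p)))⁻¹
        * (dot3 (fderiv ℝ n p (0, 1)) (du r p) * dot3 (du r p) (dv r p)
          - dot3 (fderiv ℝ n p (0, 1)) (dv r p) * dot3 (du r p) (du r p)) := by
    show dot3 _ ((len3 (cross3 (du r p) (dv r p)))⁻¹ • cross3 (du r p) (dv r p)) = _
    rw [dot3_smul_right, lagrange]
  have u6 : dot3 (cross3 (fderiv ℝ n p (1, 0)) (dv r p)) (n p)
      = (len3 (cross3 (du r p) (dv r p)))⁻¹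
        * (dot3 (fderiv ℝ n p (1, 0)) (du r p) * dot3 (dv r p) (dv r p)
          - dot3 (fderiv ℝ n p (1, 0)) (dv r p) * dot3 (dv r p) (du r p)) := by
    show dot3 _ ((len3 (cross3 (du r p) (dv r p)))⁻¹ • cross3 (du r p) (dv r p)) = _
    rw [dot3_smul_right, lagrange]
  rw [u1, u2, dot3_cross_self_left (n p) (du r p), dot3_cross_self_left (n p) (dv r p),
    u5, u6, hNru, hNru, hNrv, hNrv] at e3
  have hMM : dot3 (fderiv ℝ (du r) p (0, 1)) (n p)
      = dot3 (fderiv ℝ (dv r) p (1, 0)) (n p) := hsymm (n p)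
  have hlnz : len3 (cross3 (du r p) (dv r p)) ≠ 0 := ne_of_gt (hlpos p hp)
  have hinv : len3 (cross3 (du r p) (dv r p)) * (len3 (cross3 (du r p) (dv r p)))⁻¹ = 1 :=
    mul_inv_cancel₀ hlnz
  have goal2 : Real.sin (α p) * (Icoef₁ r p * IIcoef₃ r p - 2 * Icoef₂ r p * IIcoef₂ r p
      + Icoef₃ r p * IIcoef₁ r p) = 0 := by
    show Real.sin (α p) * (dot3 (du r p) (du r p) * dot3 (fderiv ℝ (dv r) p (0, 1)) (n p)
      - 2 * dot3 (du r p) (dv r p) * dot3 (fderiv ℝ (du r) p (0, 1)) (n p)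
      + dot3 (dv r p) (dv r p) * dot3 (fderiv ℝ (du r) p (1, 0)) (n p)) = 0
    linear_combination (len3 (cross3 (du r p) (dv r p))) * e3
      + Real.sin (α p) * (dot3 (fderiv ℝ (du r) p (0, 1)) (n p) * dot3 (du r p) (dv r p)
          - dot3 (fderiv ℝ (dv r) p (0, 1)) (n p) * dot3 (du r p) (du r p)
          - dot3 (fderiv ℝ (du r) p (1, 0)) (n p) * dot3 (dv r p) (dv r p)
          + dot3 (fderiv ℝ (dv r) p (1, 0)) (n p) * dot3 (dv r p) (du r p)) * hinv
      - Real.sin (α p) * dot3 (du r p) (dv r p) * hMM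
      + Real.sin (α p) * dot3 (fderiv ℝ (dv r) p (1, 0)) (n p) * hcomm
  -- vanishing of the gradient of α
  have hEG : dot3 (du r p) (du r p) * dot3 (dv r p) (dv r p) - dot3 (du r p) (dv r p) ^ 2
      = len3 (cross3 (du r p) (dv r p)) ^ 2 := by
    rw [hlsq p hp, lagrange, dot3_comm (dv r p) (du r p)]
    ring
  have hpyth := Real.sin_sq_add_cos_sq (α p)
  have hau0 : fderiv ℝ α p (1, 0) = 0 := by
    have hk : len3 (cross3 (du r p) (dv r p)) ^ 2 * fderiv ℝ α p (1, 0) = 0 := by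
      linear_combination (Real.cos (α p) * len3 (cross3 (du r p) (dv r p))
          - Real.sin (α p) * dot3 (du r p) (dv r p)) * eq1
        + Real.sin (α p) * dot3 (du r p) (du r p) * eq2
        - Real.sin (α p) ^ 2 * fderiv ℝ α p (1, 0) * hEG
        - len3 (cross3 (du r p) (dv r p)) ^ 2 * fderiv ℝ α p (1, 0) * hpyth
    exact (mul_eq_zero.mp hk).resolve_left (pow_ne_zero 2 hlnz)
  have hav0 : fderiv ℝ α p (0, 1) = 0 := by
    have hk : len3 (cross3 (du r p) (dv r p)) ^ 2 * fderiv ℝ α p (0, 1) = 0 := by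
      linear_combination (-(Real.sin (α p)) * dot3 (dv r p) (dv r p)) * eq1
        + (Real.sin (α p) * dot3 (du r p) (dv r p)
            + Real.cos (α p) * len3 (cross3 (du r p) (dv r p))) * eq2
        - Real.sin (α p) ^ 2 * fderiv ℝ α p (0, 1) * hEG
        - len3 (cross3 (du r p) (dv r p)) ^ 2 * fderiv ℝ α p (0, 1) * hpyth
    exact (mul_eq_zero.mp hk).resolve_left (pow_ne_zero 2 hlnz)
  have hfz : fderiv ℝ α p = 0 := by
    apply ContinuousLinearMap.ext
    intro z
    have hz : z = z.1 • ((1 : ℝ), (0 : ℝ)) + z.2 • ((0 : ℝ), (1 : ℝ)) := by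
      ext <;> simp
    rw [hz, map_add, map_smul, map_smul, hau0, hav0]
    simp
  exact ⟨hfz, goal2⟩

end PD
/-- **Pure drilling isometries exist only on minimal surfaces**
(Proposition 6.4 in coordinate form): if an isometric deformation of a `C³`
immersion has deformation gradient that is everywhere a pure drilling rotation
about the unit normal by a `C¹` angle `α`, then `α` is constant,
`sin α · H ≡ 0`, and if `sin α` does not vanish then the surface is minimal. -/
theorem pure_drilling_isometry_minimal
    (Ω : Set (ℝ × ℝ)) (hΩ : IsOpen Ω) (hconn : IsConnected Ω)
    (r : ℝ × ℝ → Fin 3 → ℝ)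
    (hr : ContDiffOn ℝ 3 r Ω)
    (himm : ∀ p ∈ Ω, cross3 (du r p) (dv r p) ≠ 0)
    (α : ℝ × ℝ → ℝ) (hα : ContDiffOn ℝ 1 α Ω)
    (hdrill : ∃ rbar : ℝ × ℝ → Fin 3 → ℝ, ContDiffOn ℝ 2 rbar Ω ∧
      ∀ p ∈ Ω,
        du rbar p = rodrigues (unitNormal r p) (α p) (du r p) ∧
        dv rbar p = rodrigues (unitNormal r p) (α p) (dv r p)) :
    (∀ p ∈ Ω, ∀ q ∈ Ω, α p = α q) ∧
    (∀ p ∈ Ω, Real.sin (α p) * meanH r p = 0) ∧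
    ((∃ p ∈ Ω, Real.sin (α p) ≠ 0) → ∀ p ∈ Ω, meanH r p = 0) := by
  obtain ⟨rbar, hrbar, hRb⟩ := hdrill
  have key := fun p hp => PD.key_pointwise Ω hΩ r hr himm α hα rbar hrbar hRb p hp
  have hconst : ∀ p ∈ Ω, ∀ q ∈ Ω, α p = α q :=
    PD.const_of_fderiv_zero hΩ hconn
      (fun q hq => PD.diffAt_of_contDiffOn hΩ hα le_rfl q hq)
      (fun q hq => (key q hq).1)
  refine ⟨hconst, fun p hp => ?_, ?_⟩
  · rw [meanH, ← mul_div_assoc, (key p hp).2, zero_div]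
  · rintro ⟨p0, hp0, hs⟩ p hp
    have hsp : Real.sin (α p) ≠ 0 := by rw [hconst p hp p0 hp0]; exact hs
    have hnum := (mul_eq_zero.mp (key p hp).2).resolve_left hsp
    rw [meanH, hnum, zero_div]
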